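/- Let F be a field of characteristic p > 0, let n ≥ 2 with p ∣ n, and suppose the quotient group Fˣ/(Fˣ)ᵖ is infinite, where (Fˣ)ᵖ = {xᵖ : x ∈ Fˣ}. Then the matrices ∑_{i=1}^{n−1} cᵢ E_{i,i+1}, as (c₁,…,c_{n−1}) ranges over (Fˣ)^{n−1}, fall into infinitely many SL_n(F)-conjugacy classes; in particular SL_n(F) has infinitely many orbits of nilpotent matrices under conjugation. -/

import Mathlib

open Matrix Finset

section Aux
variable {F : Type*} [Field F] (n : ℕ)

def myct (t : Fˣ) : Fin (n-1) → Fˣ := fun i => if i.1 = 0 then t else 1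

def myctil (t : F) (m : ℕ) : F := if m = 0 then t else if m < n-1 then 1 else 0

def myN (c : Fin (n-1) → Fˣ) : Matrix (Fin n) (Fin n) F :=
  ∑ i : Fin (n - 1), Matrix.single
                (⟨i.1, by have := i.2; omega⟩ : Fin n)
                (⟨i.1 + 1, by have := i.2; omega⟩ : Fin n) ((c i : F))

lemma myN_apply (t : Fˣ) (i j : Fin n) :
    myN n (myct n t) i j = if j.1 = i.1 + 1 then myctil n (t : F) i.1 else 0 := by
  classical
  have : myN n (myct n t) i j
      = ∑ k : Fin (n-1), Matrix.single
          (⟨k.1, by have := k.2; omega⟩ : Fin n)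
          (⟨k.1 + 1, by have := k.2; omega⟩ : Fin n) ((myct n t k : F)) i j := by
    unfold myN
    rw [Matrix.sum_apply]
  rw [this]
  by_cases hi : i.1 < n - 1
  · rw [Finset.sum_eq_single (⟨i.1, hi⟩ : Fin (n-1))]
    · rw [Matrix.single]
      simp only [Matrix.of_apply]
      by_cases hj : (j : ℕ) = i.1 + 1
      · have h1 : (⟨i.1, by omega⟩ : Fin n) = i := rfl
        rw [if_pos hj]
        have h2 : (⟨(⟨i.1, hi⟩ : Fin (n-1)).1 + 1, by omega⟩ : Fin n) = j := by
          apply Fin.ext; simp [hj]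
        rw [if_pos ⟨trivial, h2⟩]
        simp [myct, myctil, hi]
        split_ifs <;> simp
      · rw [if_neg hj, if_neg]
        rintro ⟨-, h2⟩
        exact hj (congrArg Fin.val h2).symm
    · intro k _ hk
      rw [Matrix.single]
      simp only [Matrix.of_apply]
      rw [if_neg]
      rintro ⟨h1, -⟩
      apply hk
      apply Fin.ext
      have : k.1 = i.1 := congrArg Fin.val h1
      simpa using this
    · intro h; exact absurd (Finset.mem_univ _) h
  · rw [Finset.sum_eq_zero, if_neg]
    · intro hj; omega
    · intro k _
      rw [Matrix.single]
      simp only [Matrix.of_apply]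
      rw [if_neg]
      rintro ⟨h1, -⟩
      have : k.1 = i.1 := congrArg Fin.val h1
      omega

end Aux
section Aux2
variable {F : Type*} [Field F] (n : ℕ)

lemma myN_pow (t : Fˣ) (k : ℕ) (i j : Fin n) :
    ((myN n (myct n t)) ^ k) i j
      = if j.1 = i.1 + k then ∏ m ∈ Finset.range k, myctil n (t : F) (i.1+m) else 0 := by
  classical
  induction k generalizing i j with
  | zero =>
    simp only [pow_zero, Finset.range_zero, Finset.prod_empty, Nat.add_zero]
    rw [Matrix.one_apply]
    by_cases h : i = j
    · rw [if_pos h, if_pos (congrArg Fin.val h).symm]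
    · rw [if_neg h, if_neg]
      intro hj; exact h (Fin.ext hj.symm)
  | succ k ih =>
    rw [pow_succ, Matrix.mul_apply]
    by_cases hj : j.1 = i.1 + (k+1)
    · have hik : i.1 + k < n := by have := j.2; omega
      rw [Finset.sum_eq_single (⟨i.1 + k, hik⟩ : Fin n)]
      · rw [ih, myN_apply, if_pos rfl, if_pos (by omega), if_pos hj,
          Finset.prod_range_succ]
      · intro l _ hl
        rw [ih]
        rw [if_neg, zero_mul]
        intro h; exact hl (Fin.ext h)
      · intro h; exact absurd (Finset.mem_univ _) h
    · rw [if_neg hj, Finset.sum_eq_zero]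
      intro l _
      rw [ih, myN_apply]
      by_cases h1 : l.1 = i.1 + k
      · rw [if_pos h1, if_neg, mul_zero]
        intro h2; exact hj (by omega)
      · rw [if_neg h1, zero_mul]

lemma myN_pow_mulVec (t : Fˣ) (k : ℕ) (v : Fin n → F) (i : Fin n) :
    ((myN n (myct n t)) ^ k *ᵥ v) i
      = if h : i.1 + k < n
          then (∏ m ∈ Finset.range k, myctil n (t : F) (i.1+m)) * v ⟨i.1+k, h⟩ else 0 := by
  classical
  rw [Matrix.mulVec, dotProduct]
  by_cases h : i.1 + k < n
  · rw [dif_pos h, Finset.sum_eq_single (⟨i.1+k, h⟩ : Fin n)]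
    · rw [myN_pow, if_pos rfl]
    · intro l _ hl
      rw [myN_pow, if_neg, zero_mul]
      intro h2; exact hl (Fin.ext h2)
    · intro h2; exact absurd (Finset.mem_univ _) h2
  · rw [dif_neg h, Finset.sum_eq_zero]
    intro l _
    rw [myN_pow, if_neg, zero_mul]
    intro h2
    have := l.2; omega

lemma myN_pow_n (t : Fˣ) : (myN n (myct n t)) ^ n = 0 := by
  ext i j
  rw [myN_pow]
  rw [if_neg, Matrix.zero_apply]
  have := j.2; omega

def myA (t : Fˣ) (v : Fin n → F) : Matrix (Fin n) (Fin n) F :=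
  Matrix.of fun i j => ((myN n (myct n t)) ^ (n - 1 - j.1) *ᵥ v) i

end Aux2
section Aux3
variable {F : Type*} [Field F] (n : ℕ)

lemma myA_det (hn : 2 ≤ n) (t : Fˣ) (v : Fin n → F) :
    (myA n t v).det = v ⟨n-1, by omega⟩ ^ n * (t : F) := by
  classical
  have htri : (myA n t v).BlockTriangular id := by
    intro i j hij
    simp only [id] at hij
    show ((myN n (myct n t)) ^ (n - 1 - j.1) *ᵥ v) i = 0
    rw [myN_pow_mulVec, dif_neg]
    have := i.2; have := j.2
    omega
  rw [Matrix.det_of_upperTriangular htri]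
  have hdiag : ∀ i : Fin n, myA n t v i i
      = (∏ m ∈ Finset.range (n - 1 - i.1), myctil n (t : F) (i.1+m)) * v ⟨n-1, by omega⟩ := by
    intro i
    show ((myN n (myct n t)) ^ (n - 1 - i.1) *ᵥ v) i = _
    rw [myN_pow_mulVec, dif_pos (by have := i.2; omega)]
    have hi2 : i.1 + (n - 1 - i.1) = n - 1 := by have := i.2; omega
    congr 1
    exact congrArg v (Fin.ext (by simpa using hi2))
  calc ∏ i : Fin n, myA n t v i i
      = ∏ i : Fin n, (∏ m ∈ Finset.range (n - 1 - i.1), myctil n (t : F) (i.1+m))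
          * v ⟨n-1, by omega⟩ := by
        exact Finset.prod_congr rfl fun i _ => hdiag i
    _ = (∏ i : Fin n, ∏ m ∈ Finset.range (n - 1 - i.1), myctil n (t : F) (i.1+m))
          * ∏ _i : Fin n, v ⟨n-1, by omega⟩ := by rw [Finset.prod_mul_distrib]
    _ = (t : F) * v ⟨n-1, by omega⟩ ^ n := by
        congr 1
        · have h1 : ∀ i : Fin n, i.1 ≠ 0 →
              (∏ m ∈ Finset.range (n - 1 - i.1), myctil n (t : F) (i.1+m)) = 1 := by
            intro i hi
            apply Finset.prod_eq_one
            intro m hm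
            rw [Finset.mem_range] at hm
            unfold myctil
            rw [if_neg (by omega), if_pos (by omega)]
          rw [Finset.prod_eq_single (⟨0, by omega⟩ : Fin n)]
          · have : n - 1 - (0:ℕ) = n - 1 := by omega
            simp only [this]
            have h2 : n - 1 = (n-2) + 1 := by omega
            rw [h2, Finset.prod_range_succ']
            have : ∀ m ∈ Finset.range (n-2), myctil n (t:F) (0 + (m+1)) = 1 := by
              intro m hm
              rw [Finset.mem_range] at hm
              unfold myctil
              rw [if_neg (by omega), if_pos (by omega)]
            rw [Finset.prod_congr rfl this]
            simp [myctil]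
          · intro i _ hi
            apply h1
            intro h0
            exact hi (Fin.ext h0)
          · intro h; exact absurd (Finset.mem_univ _) h
        · rw [Finset.prod_const]
          simp
    _ = v ⟨n-1, by omega⟩ ^ n * (t : F) := mul_comm _ _

end Aux3
section Aux4
variable {F : Type*} [Field F] (n : ℕ)

def myE : Fin n → F := fun j => if j.1 = n-1 then 1 else 0

def myOrbit (t : Fˣ) : Set (Matrix (Fin n) (Fin n) F) :=
  {Y | ∃ g : Matrix.SpecialLinearGroup (Fin n) F,
    Y = (g : Matrix (Fin n) (Fin n) F) * myN n (myct n t) *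
        ((g⁻¹ : Matrix.SpecialLinearGroup (Fin n) F) : Matrix (Fin n) (Fin n) F)}

lemma key (hn : 2 ≤ n) (t t' : Fˣ) (h : myOrbit n t = myOrbit n t') :
    ∃ b : Fˣ, t' = b ^ n * t := by
  classical
  have hmem : myN n (myct n t) ∈ myOrbit n t := by
    refine ⟨1, ?_⟩
    simp [Matrix.SpecialLinearGroup.coe_one]
  rw [h] at hmem
  obtain ⟨g, hg⟩ := hmem
  have hginv : ((g⁻¹ : Matrix.SpecialLinearGroup (Fin n) F) : Matrix (Fin n) (Fin n) F)
      * (g : Matrix (Fin n) (Fin n) F) = 1 := by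
    rw [← Matrix.SpecialLinearGroup.coe_mul, inv_mul_cancel, Matrix.SpecialLinearGroup.coe_one]
  have hsc : SemiconjBy (g : Matrix (Fin n) (Fin n) F)
      (myN n (myct n t')) (myN n (myct n t)) := by
    unfold SemiconjBy
    rw [hg]
    rw [Matrix.mul_assoc, Matrix.mul_assoc, hginv, Matrix.mul_one]
  set v : Fin n → F := (g : Matrix (Fin n) (Fin n) F) *ᵥ myE n with hv
  have hA : myA n t v = (g : Matrix (Fin n) (Fin n) F) * myA n t' (myE n) := by
    ext i j
    show ((myN n (myct n t)) ^ (n-1-j.1) *ᵥ v) i = _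
    rw [hv, Matrix.mulVec_mulVec, ← (hsc.pow_right (n-1-j.1)).eq, ← Matrix.mulVec_mulVec]
    rw [Matrix.mul_apply]
    rw [Matrix.mulVec, dotProduct]
    rfl
  have hdet : v ⟨n-1, by omega⟩ ^ n * (t : F) = (t' : F) := by
    have h1 := myA_det n hn t v
    rw [hA, Matrix.det_mul, g.prop, one_mul, myA_det n hn t' (myE n)] at h1
    have h2 : myE n (⟨n-1, by omega⟩ : Fin n) = (1 : F) := if_pos rfl
    rw [h2, one_pow, one_mul] at h1
    exact h1.symm
  set b := v ⟨n-1, by omega⟩ with hb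
  have hbne : b ≠ 0 := by
    intro h0
    rw [h0, zero_pow (by omega), zero_mul] at hdet
    exact t'.ne_zero hdet.symm
  refine ⟨Units.mk0 b hbne, ?_⟩
  apply Units.ext
  push_cast
  rw [← hdet]
  rfl

end Aux4

/-- Let `F` be a field of characteristic `p > 0`, let `n ≥ 2` with `p ∣ n`, and suppose the
quotient group `Fˣ/(Fˣ)ᵖ` is infinite.  Then the matrices `∑ cᵢ E_{i,i+1}`, as
`(c₁,…,c_{n−1})` ranges over `(Fˣ)^{n−1}`, fall into infinitely many `SL_n(F)`-conjugacy
classes; in particular `SL_n(F)` has infinitely many orbits of nilpotent matrices under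
conjugation. -/
theorem infinitely_many_regular_nilpotent_SL_orbits
    {F : Type*} [Field F] (p n : ℕ) (hp : 0 < p) [CharP F p]
    (hn : 2 ≤ n) (hpn : p ∣ n)
    (hinf : Infinite (Fˣ ⧸ (powMonoidHom p : Fˣ →* Fˣ).range)) :
    {S : Set (Matrix (Fin n) (Fin n) F) | ∃ c : Fin (n - 1) → Fˣ,
        S = {Y | ∃ g : Matrix.SpecialLinearGroup (Fin n) F,
          Y = (g : Matrix (Fin n) (Fin n) F) *
              (∑ i : Fin (n - 1), Matrix.single
                (⟨i.1, by have := i.2; omega⟩ : Fin n)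
                (⟨i.1 + 1, by have := i.2; omega⟩ : Fin n) ((c i : F))) *
              ((g⁻¹ : Matrix.SpecialLinearGroup (Fin n) F) : Matrix (Fin n) (Fin n) F)}}.Infinite ∧
    {S : Set (Matrix (Fin n) (Fin n) F) | ∃ X : Matrix (Fin n) (Fin n) F, IsNilpotent X ∧
        S = {Y | ∃ g : Matrix.SpecialLinearGroup (Fin n) F,
          Y = (g : Matrix (Fin n) (Fin n) F) * X *
              ((g⁻¹ : Matrix.SpecialLinearGroup (Fin n) F) : Matrix (Fin n) (Fin n) F)}}.Infinite := by
  classical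
  set Q := Fˣ ⧸ (powMonoidHom p : Fˣ →* Fˣ).range with hQ
  set f : Q → Set (Matrix (Fin n) (Fin n) F) := fun q => myOrbit n q.out with hf
  have hinj : Function.Injective f := by
    intro q q' hqq
    obtain ⟨b, hb⟩ := key n hn q.out q'.out hqq
    have hmem : (q.out)⁻¹ * q'.out ∈ (powMonoidHom p : Fˣ →* Fˣ).range := by
      refine ⟨b ^ (n / p), ?_⟩
      show (b ^ (n / p)) ^ p = _
      rw [← pow_mul, Nat.div_mul_cancel hpn, hb]
      rw [mul_comm]
      rw [mul_assoc, mul_inv_cancel, mul_one]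
    have : ((q.out : Fˣ) : Q) = ((q'.out : Fˣ) : Q) := QuotientGroup.eq.mpr hmem
    rwa [QuotientGroup.out_eq' q, QuotientGroup.out_eq' q'] at this
  constructor
  · apply Set.infinite_of_injective_forall_mem hinj
    intro q
    exact ⟨myct n q.out, rfl⟩
  · apply Set.infinite_of_injective_forall_mem hinj
    intro q
    exact ⟨myN n (myct n q.out), ⟨n, myN_pow_n n q.out⟩, rfl⟩
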